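/- Let u : I × X → [−c/2, c/2] be a family of bounded functions indexed by I, with X ∼ D^m. Let R = E_{X,σ}[sup_{i∈I} |(1/m)Σ_j σ_j u(i,X_j)|] denote the Rademacher average. Then with probability at least 1 − δ over X, sup_{i∈I} | E_D[u(i,·)] − (1/m)Σ_j u(i,X_j) | ≤ 2R + c·sqrt(ln(1/δ)/(2m)). -/

import Mathlib

open MeasureTheory

/-- The distribution of a Rademacher sign: uniform on {1, -1} ⊆ ℝ. -/
noncomputable def signMeasure : Measure ℝ :=
  (1/2 : ENNReal) • Measure.dirac 1 + (1/2 : ENNReal) • Measure.dirac (-1)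

open Real

/-- Key analytic inequality for Hoeffding's lemma. -/
lemma key_ineq {p : ℝ} (hp0 : 0 ≤ p) (hp1 : p ≤ 1) (h : ℝ) :
    Real.exp (-(p*h)) * (1 - p + p * Real.exp h) ≤ Real.exp (h^2/8) := by
  have hD : ∀ x : ℝ, 0 < 1 - p + p * Real.exp x := by
    intro x
    rcases lt_or_eq_of_le hp1 with h1 | h1
    · nlinarith [Real.exp_pos x, mul_nonneg hp0 (Real.exp_pos x).le]
    · nlinarith [Real.exp_pos x]
  set L : ℝ → ℝ := fun x => -(p*x) + Real.log (1 - p + p * Real.exp x) with hLdef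
  set L1 : ℝ → ℝ := fun x => -p + p * Real.exp x / (1 - p + p * Real.exp x) with hL1def
  have hL' : ∀ x, HasDerivAt L (L1 x) x := by
    intro x
    have hDd : HasDerivAt (fun x => 1 - p + p * Real.exp x) (p * Real.exp x) x := by
      simpa using ((Real.hasDerivAt_exp x).const_mul p).const_add (1 - p)
    have := (Real.hasDerivAt_log (hD x).ne').comp x hDd
    have h2 : HasDerivAt (fun x => -(p*x)) (-p) x := by
      simpa using (hasDerivAt_id x).const_mul (-p)
    exact (h2.add this).congr_deriv (by simp only [hL1def]; ring)
  have hL1' : ∀ x, HasDerivAt L1 (p * Real.exp x * (1-p) / (1 - p + p * Real.exp x)^2) x := by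
    intro x
    have hDd : HasDerivAt (fun x => 1 - p + p * Real.exp x) (p * Real.exp x) x := by
      simpa using ((Real.hasDerivAt_exp x).const_mul p).const_add (1 - p)
    have hN : HasDerivAt (fun x => p * Real.exp x) (p * Real.exp x) x :=
      (Real.hasDerivAt_exp x).const_mul p
    have h2 := (hasDerivAt_const x (-p)).add (hN.div hDd (hD x).ne')
    refine h2.congr_deriv ?_
    ring
  have hφ1' : ∀ x, HasDerivAt (fun y => y/4 - L1 y)
      (1/4 - p * Real.exp x * (1-p) / (1 - p + p * Real.exp x)^2) x := by
    intro x
    exact ((hasDerivAt_id x).div_const 4).sub (hL1' x)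
  have hφ1nonneg : ∀ x, 0 ≤ 1/4 - p * Real.exp x * (1-p) / (1 - p + p * Real.exp x)^2 := by
    intro x
    rw [sub_nonneg, div_le_iff₀ (pow_pos (hD x) 2)]
    nlinarith [sq_nonneg (p * Real.exp x - (1-p))]
  have hφ1mono : Monotone (fun y => y/4 - L1 y) := by
    apply monotone_of_deriv_nonneg (fun x => (hφ1' x).differentiableAt)
    intro x
    rw [(hφ1' x).deriv]
    exact hφ1nonneg x
  have hL10 : L1 0 = 0 := by simp [hL1def]
  have hφ' : ∀ x, HasDerivAt (fun y => y^2/8 - L y) (x/4 - L1 x) x := by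
    intro x
    have hsq : HasDerivAt (fun y : ℝ => y^2/8) (x/4) x := by
      have := ((hasDerivAt_pow 2 x).div_const 8)
      refine this.congr_deriv ?_
      norm_num [div_eq_mul_inv]
      ring
    exact hsq.sub (hL' x)
  have hL0 : L 0 = 0 := by simp [hLdef]
  have hdiff : ∀ y, DifferentiableAt ℝ (fun y => y^2/8 - L y) y :=
    fun y => (hφ' y).differentiableAt
  have hcont : Continuous (fun y => y^2/8 - L y) :=
    (Differentiable.continuous (fun y => hdiff y))
  have hmain : ∀ x, 0 ≤ x^2/8 - L x := by
    intro x
    rcases le_or_gt 0 x with hx | hx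
    · have hmonoOn : MonotoneOn (fun y => y^2/8 - L y) (Set.Ici 0) := by
        apply monotoneOn_of_deriv_nonneg (convex_Ici 0) hcont.continuousOn
          (fun y _ => (hdiff y).differentiableWithinAt)
        intro y hy
        rw [interior_Ici] at hy
        rw [(hφ' y).deriv]
        have := hφ1mono (le_of_lt hy : (0:ℝ) ≤ y)
        simpa [hL10] using this
      have := hmonoOn (Set.self_mem_Ici) (Set.mem_Ici.mpr hx) hx
      simpa [hL0] using this
    · have hantiOn : AntitoneOn (fun y => y^2/8 - L y) (Set.Iic 0) := by
        apply antitoneOn_of_deriv_nonpos (convex_Iic 0) hcont.continuousOn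
          (fun y _ => (hdiff y).differentiableWithinAt)
        intro y hy
        rw [interior_Iic] at hy
        rw [(hφ' y).deriv]
        have := hφ1mono (le_of_lt hy : y ≤ (0:ℝ))
        simpa [hL10] using this
      have := hantiOn (Set.mem_Iic.mpr hx.le) (Set.self_mem_Iic) hx.le
      simpa [hL0] using this
  have hLle : L h ≤ h^2/8 := by linarith [hmain h]
  calc Real.exp (-(p*h)) * (1 - p + p * Real.exp h) = Real.exp (L h) := by
        rw [Real.exp_add, Real.exp_log (hD h)]
    _ ≤ Real.exp (h^2/8) := Real.exp_le_exp.mpr hLle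

lemma integrable_of_bdd {α : Type*} [MeasurableSpace α] {ν : Measure α} [IsFiniteMeasure ν]
    {f : α → ℝ} (hf : AEStronglyMeasurable f ν) {C : ℝ} (hC : ∀ᵐ x ∂ν, |f x| ≤ C) :
    Integrable f ν :=
  Integrable.mono' (integrable_const C) hf (by simpa [Real.norm_eq_abs] using hC)

/-- Hoeffding's lemma. -/
lemma hoeffding_lemma {α : Type*} [MeasurableSpace α] (ν : Measure α) [IsProbabilityMeasure ν]
    {Y : α → ℝ} (hY : Measurable Y) {a b : ℝ} (hab : ∀ x, Y x ∈ Set.Icc a b)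
    (h0 : ∫ x, Y x ∂ν = 0) (t : ℝ) :
    ∫ x, Real.exp (t * Y x) ∂ν ≤ Real.exp (t^2 * (b-a)^2 / 8) := by
  have hintY : Integrable Y ν := by
    apply integrable_of_bdd hY.aestronglyMeasurable (C := |a| + |b|)
    filter_upwards with x
    rcases hab x with ⟨h1, h2⟩
    cases' abs_cases (Y x) with h h <;> cases' abs_cases a with ha' ha' <;>
      cases' abs_cases b with hb' hb' <;> linarith
  have ha0 : a ≤ 0 := by
    have : ∫ _x, a ∂ν ≤ ∫ x, Y x ∂ν :=
      integral_mono (integrable_const a) hintY fun x => (hab x).1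
    simpa [h0] using this
  have hb0 : 0 ≤ b := by
    have : ∫ x, Y x ∂ν ≤ ∫ _x, b ∂ν :=
      integral_mono hintY (integrable_const b) fun x => (hab x).2
    simpa [h0] using this
  rcases eq_or_lt_of_le (ha0.trans hb0 : a ≤ b) with hba | hba
  · -- a = b hence a = b = 0 and Y = 0
    have ha : a = 0 := le_antisymm ha0 (hba ▸ hb0)
    have hb : b = 0 := hba ▸ ha
    have hYx : ∀ x, Y x = 0 := fun x => le_antisymm (hb ▸ (hab x).2) (ha ▸ (hab x).1)
    simp only [hYx, mul_zero, Real.exp_zero, integral_const, measure_univ,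
      ENNReal.toReal_one, probReal_univ, smul_eq_mul, mul_one]
    rw [Real.one_le_exp_iff.symm] at *
    · exact Real.one_le_exp (by positivity)
  · -- main case
    have hintexp : Integrable (fun x => Real.exp (t * Y x)) ν := by
      apply integrable_of_bdd ((hY.const_mul t).exp).aestronglyMeasurable
        (C := Real.exp (|t| * |a| + |t| * |b|))
      filter_upwards with x
      rw [abs_of_pos (Real.exp_pos _), Real.exp_le_exp]
      calc t * Y x ≤ |t * Y x| := le_abs_self _
        _ = |t| * |Y x| := abs_mul t _
        _ ≤ |t| * (|a| + |b|) := by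
            apply mul_le_mul_of_nonneg_left _ (abs_nonneg t)
            rcases abs_le.mp (le_refl |Y x|) with _
            have := (hab x)
            cases' abs_cases (Y x) with h h <;> rcases this with ⟨h1, h2⟩ <;>
              cases' abs_cases a with ha' ha' <;> cases' abs_cases b with hb' hb' <;> linarith
        _ = |t| * |a| + |t| * |b| := by ring
    -- pointwise convexity bound
    have hconv : ∀ x, Real.exp (t * Y x) ≤
        ((b - Y x) * Real.exp (t*a) + (Y x - a) * Real.exp (t*b)) / (b - a) := by
      intro x
      rcases hab x with ⟨h1, h2⟩
      have hw1 : (0:ℝ) ≤ (b - Y x)/(b-a) := div_nonneg (by linarith) (by linarith)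
      have hw2 : (0:ℝ) ≤ (Y x - a)/(b-a) := div_nonneg (by linarith) (by linarith)
      have hsum : (b - Y x)/(b-a) + (Y x - a)/(b-a) = 1 := by
        rw [← add_div]
        rw [div_eq_one_iff_eq (by linarith : b - a ≠ 0)]
        ring
      have := convexOn_exp.2 (Set.mem_univ (t*a)) (Set.mem_univ (t*b)) hw1 hw2 hsum
      have harg : ((b - Y x)/(b-a)) • (t*a) + ((Y x - a)/(b-a)) • (t*b) = t * Y x := by
        simp only [smul_eq_mul]
        have : (b - Y x)/(b-a) * (t*a) + (Y x - a)/(b-a) * (t*b)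
            = (t * Y x) * ((b-a)/(b-a)) := by ring
        rw [this, div_self (by linarith : b - a ≠ 0), mul_one]
      rw [harg] at this
      simp only [smul_eq_mul] at this
      calc Real.exp (t * Y x) ≤ (b - Y x)/(b-a) * Real.exp (t*a) + (Y x - a)/(b-a) * Real.exp (t*b) := this
        _ = ((b - Y x) * Real.exp (t*a) + (Y x - a) * Real.exp (t*b)) / (b - a) := by ring
    have hle1 : ∫ x, Real.exp (t * Y x) ∂ν ≤ (b * Real.exp (t*a) - a * Real.exp (t*b)) / (b - a) := by
      have hi1 : Integrable (fun x => (b - Y x) * Real.exp (t*a)) ν :=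
        (((integrable_const b).sub hintY).mul_const _)
      have hi2 : Integrable (fun x => (Y x - a) * Real.exp (t*b)) ν :=
        ((hintY.sub (integrable_const a)).mul_const _)
      have hintrhs : Integrable (fun x =>
          ((b - Y x) * Real.exp (t*a) + (Y x - a) * Real.exp (t*b)) / (b - a)) ν :=
        (hi1.add hi2).div_const _
      calc ∫ x, Real.exp (t * Y x) ∂ν
          ≤ ∫ x, ((b - Y x) * Real.exp (t*a) + (Y x - a) * Real.exp (t*b)) / (b - a) ∂ν :=
            integral_mono hintexp hintrhs hconv
        _ = (b * Real.exp (t*a) - a * Real.exp (t*b)) / (b - a) := by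
            rw [integral_div]
            congr 1
            rw [integral_add hi1 hi2, integral_mul_const, integral_mul_const,
              integral_sub (integrable_const b) hintY,
              integral_sub hintY (integrable_const a), h0]
            simp
            ring
    -- rewrite RHS using key_ineq with p = -a/(b-a), h = t*(b-a)
    set p := -a/(b-a) with hp
    have hp0 : 0 ≤ p := div_nonneg (by linarith) (by linarith)
    have hp1 : p ≤ 1 := by
      rw [hp, div_le_one (by linarith)]
      linarith
    have hrw : (b * Real.exp (t*a) - a * Real.exp (t*b)) / (b - a)
        = Real.exp (-(p*(t*(b-a)))) * (1 - p + p * Real.exp (t*(b-a))) := by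
      have hba' : b - a ≠ 0 := by linarith
      have h1 : -(p*(t*(b-a))) = t*a := by
        rw [hp]
        field_simp
      have hexp : Real.exp (t*a) * Real.exp (t*(b-a)) = Real.exp (t*b) := by
        rw [← Real.exp_add]
        ring_nf
      have hbb : b/(b-a) = 1 - p := by
        rw [hp]
        field_simp
        ring
      rw [h1]
      have hlhs : (b * Real.exp (t*a) - a * Real.exp (t*b)) / (b - a)
          = (b/(b-a)) * Real.exp (t*a) + (-a/(b-a)) * Real.exp (t*b) := by ring
      rw [hlhs, hbb, ← hp]
      calc (1-p) * Real.exp (t*a) + p * Real.exp (t*b)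
          = (1-p)*Real.exp (t*a) + p*(Real.exp (t*a)*Real.exp (t*(b-a))) := by rw [hexp]
        _ = Real.exp (t*a) * (1 - p + p * Real.exp (t*(b-a))) := by ring
    have hkey := key_ineq hp0 hp1 (t*(b-a))
    have : (t*(b-a))^2/8 = t^2*(b-a)^2/8 := by ring
    rw [this] at hkey
    calc ∫ x, Real.exp (t * Y x) ∂ν ≤ (b * Real.exp (t*a) - a * Real.exp (t*b)) / (b - a) := hle1
      _ = _ := hrw
      _ ≤ Real.exp (t^2*(b-a)^2/8) := hkey



/-- McDiarmid mgf bound over a finite product of probability measures. -/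
lemma mcdiarmid_mgf {𝒳 : Type*} [MeasurableSpace 𝒳] (μ : Measure 𝒳) [IsProbabilityMeasure μ]
    {d : ℝ} (hd : 0 ≤ d) (t : ℝ) :
    ∀ (n : ℕ) (f : (Fin n → 𝒳) → ℝ), Measurable f → ∀ (M : ℝ), (∀ X, |f X| ≤ M) →
    (∀ (X) (j) (v), f X - f (Function.update X j v) ≤ d) →
    ∫ X, Real.exp (t * (f X - ∫ Y, f Y ∂(Measure.pi fun _ : Fin n => μ)))
        ∂(Measure.pi fun _ : Fin n => μ) ≤ Real.exp (t^2 * d^2 * n / 8) := by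
  have hne : Nonempty 𝒳 := by
    by_contra h
    rw [not_nonempty_iff] at h
    have : μ Set.univ = 1 := measure_univ
    rw [Set.univ_eq_empty_iff.mpr h, measure_empty] at this
    exact zero_ne_one this
  intro n
  induction n with
  | zero =>
    intro f hf M hM hbd
    have hsub : ∀ X : Fin 0 → 𝒳, f X = f (fun j => j.elim0) := by
      intro X
      congr 1
      exact funext fun j => j.elim0
    have : ∀ X : Fin 0 → 𝒳, f X - ∫ Y, f Y ∂(Measure.pi fun _ : Fin 0 => μ) = 0 := by
      intro X
      have h1 : ∫ Y, f Y ∂(Measure.pi fun _ : Fin 0 => μ)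
          = ∫ _Y, f (fun j => j.elim0) ∂(Measure.pi fun _ : Fin 0 => μ) := by
        congr 1
        exact funext fun Y => hsub Y
      rw [hsub X, h1, integral_const, probReal_univ]
      simp
    simp only [this, mul_zero, Real.exp_zero, integral_const, measure_univ]
    simp
  | succ n IH =>
    intro f hf M hM hbd
    set P' : Measure (Fin n → 𝒳) := Measure.pi fun _ => μ with hP'
    set P : Measure (Fin (n+1) → 𝒳) := Measure.pi fun _ => μ with hP
    set e := MeasurableEquiv.piFinSuccAbove (fun _ : Fin (n+1) => 𝒳) 0 with he
    have mp : MeasurePreserving e P ((μ.prod (Measure.pi fun _ : Fin n => μ))) := by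
      have := measurePreserving_piFinSuccAbove (fun _ : Fin (n+1) => μ) 0
      convert this using 2
    -- H on the product space
    set H : 𝒳 × (Fin n → 𝒳) → ℝ := fun q => f (Fin.cons q.1 q.2) with hH
    have hcons : ∀ q : 𝒳 × (Fin n → 𝒳), Fin.cons q.1 q.2 = e.symm q := by
      intro q
      show Fin.cons q.1 q.2 = (Fin.insertNthEquiv (fun _ => 𝒳) 0).symm.symm q
      rw [Equiv.symm_symm]
      simp [Fin.insertNthEquiv, Fin.insertNth_zero]
    have hHmeas : Measurable H := by
      apply hf.comp
      rw [funext hcons]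
      exact e.symm.measurable
    have hHbd : ∀ q, |H q| ≤ M := fun q => hM _
    -- g : averaged over first coordinate
    set g : (Fin n → 𝒳) → ℝ := fun X => ∫ x₀, H (x₀, X) ∂μ with hg
    have hgmeas : Measurable g :=
      (hHmeas.stronglyMeasurable.integral_prod_left').measurable
    have hgbd : ∀ X, |g X| ≤ M := by
      intro X
      have hM0 : 0 ≤ M := (abs_nonneg _).trans (hM (Fin.cons Classical.ofNonempty fun _ => Classical.ofNonempty))
      have := norm_integral_le_of_norm_le_const (μ := μ) (f := fun x₀ => H (x₀, X)) (C := M)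
        (Filter.Eventually.of_forall fun x₀ => by simpa [Real.norm_eq_abs] using hHbd (x₀, X))
      simpa [Real.norm_eq_abs, measure_univ] using this
    have hintH : ∀ X, Integrable (fun x₀ => H (x₀, X)) μ :=
      fun X => integrable_of_bdd (hHmeas.comp (measurable_id.prodMk measurable_const)).aestronglyMeasurable
        (Filter.Eventually.of_forall fun x₀ => hHbd (x₀, X))
    have hgbdd : ∀ (X) (j) (v), g X - g (Function.update X j v) ≤ d := by
      intro X j v
      have : ∀ x₀, H (x₀, X) - H (x₀, Function.update X j v) ≤ d := by
        intro x₀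
        have := hbd (Fin.cons x₀ X) j.succ v
        rwa [← Fin.cons_update] at this
      calc g X - g (Function.update X j v)
          = ∫ x₀, (H (x₀, X) - H (x₀, Function.update X j v)) ∂μ := by
            rw [integral_sub (hintH X) (hintH _)]
        _ ≤ ∫ _x₀, d ∂μ := integral_mono ((hintH X).sub (hintH _)) (integrable_const d) this
        _ = d := by simp
      -- A = ∫ f dP = ∫ g dP'
    have hintHprod : Integrable H (μ.prod P') := by
      apply integrable_of_bdd hHmeas.aestronglyMeasurable
        (Filter.Eventually.of_forall hHbd)
    have hA : ∫ X, f X ∂P = ∫ X, g X ∂P' := by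
      have h1 : ∫ X, f X ∂P = ∫ q, H q ∂(μ.prod P') := by
        rw [← mp.integral_comp e.measurableEmbedding]
        congr 1
        funext X
        show f X = H (e X)
        symm
        rw [hH]
        show f (Fin.cons (e X).1 (e X).2) = f X
        rw [hcons (e X), MeasurableEquiv.symm_apply_apply]
      rw [h1, integral_prod_symm _ hintHprod]
    set A := ∫ X, f X ∂P with hAdef
    -- full integrand on product space
    have hint2 : Integrable (fun q => Real.exp (t * (H q - A))) (μ.prod P') := by
      apply integrable_of_bdd (C := Real.exp (|t| * (M + |A|)))
        (((hHmeas.sub_const A).const_mul t).exp).aestronglyMeasurable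
      filter_upwards with q
      rw [abs_of_pos (Real.exp_pos _), Real.exp_le_exp]
      calc t * (H q - A) ≤ |t * (H q - A)| := le_abs_self _
        _ = |t| * |H q - A| := abs_mul _ _
        _ ≤ |t| * (M + |A|) := by
            apply mul_le_mul_of_nonneg_left _ (abs_nonneg t)
            calc |H q - A| ≤ |H q| + |A| := abs_sub _ _
              _ ≤ M + |A| := by linarith [hHbd q]
    have hstep : ∫ X, Real.exp (t * (f X - A)) ∂P
        = ∫ X, (∫ x₀, Real.exp (t * (H (x₀, X) - A)) ∂μ) ∂P' := by
      have h1 : ∫ X, Real.exp (t * (f X - A)) ∂P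
          = ∫ q, Real.exp (t * (H q - A)) ∂(μ.prod P') := by
        rw [← mp.integral_comp e.measurableEmbedding]
        congr 1
        funext X
        symm
        show Real.exp (t * (H (e X) - A)) = _
        rw [hH]
        show Real.exp (t * (f (Fin.cons (e X).1 (e X).2) - A)) = _
        rw [hcons (e X), MeasurableEquiv.symm_apply_apply]
      rw [h1, integral_prod_symm _ hint2]
    -- inner Hoeffding bound
    have hinner : ∀ X, ∫ x₀, Real.exp (t * (H (x₀, X) - A)) ∂μ
        ≤ Real.exp (t * (g X - A)) * Real.exp (t^2 * d^2 / 8) := by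
      intro X
      set Y : 𝒳 → ℝ := fun x₀ => H (x₀, X) - g X with hY
      have hYmeas : Measurable Y :=
        (hHmeas.comp (measurable_id.prodMk measurable_const)).sub_const _
      have hY0 : ∫ x₀, Y x₀ ∂μ = 0 := by
        rw [hY]
        rw [integral_sub (hintH X) (integrable_const _)]
        simp [hg]
      have hYbd : ∀ x₀, |Y x₀| ≤ M + M := by
        intro x₀
        calc |Y x₀| ≤ |H (x₀, X)| + |g X| := abs_sub _ _
          _ ≤ M + M := add_le_add (hHbd _) (hgbd X)
      have hbddbelow : BddBelow (Set.range Y) := by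
        refine ⟨-(M+M), fun y hy => ?_⟩
        rcases hy with ⟨x₀, rfl⟩
        linarith [abs_le.mp (hYbd x₀)]
      set a := sInf (Set.range Y) with ha
      have hrange : ∀ x₀, Y x₀ ∈ Set.Icc a (a + d) := by
        intro x₀
        constructor
        · exact csInf_le hbddbelow (Set.mem_range_self x₀)
        · have hlb : ∀ y ∈ Set.range Y, Y x₀ - d ≤ y := by
            rintro y ⟨x₀', rfl⟩
            have : H (x₀, X) - H (x₀', X) ≤ d := by
              have := hbd (Fin.cons x₀ X) 0 x₀'
              rwa [Fin.update_cons_zero] at this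
            simp only [hY]
            linarith
          have := le_csInf ⟨Y x₀, Set.mem_range_self x₀⟩ hlb
          linarith
      have hhoeff := hoeffding_lemma μ hYmeas hrange hY0 t
      have hba : (a + d - a)^2 = d^2 := by ring
      rw [hba] at hhoeff
      have hrw : ∀ x₀, Real.exp (t * (H (x₀, X) - A))
          = Real.exp (t * (g X - A)) * Real.exp (t * Y x₀) := by
        intro x₀
        rw [← Real.exp_add]
        congr 1
        simp only [hY]
        ring
      calc ∫ x₀, Real.exp (t * (H (x₀, X) - A)) ∂μ
          = Real.exp (t * (g X - A)) * ∫ x₀, Real.exp (t * Y x₀) ∂μ := by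
            simp_rw [hrw]
            rw [integral_const_mul]
        _ ≤ Real.exp (t * (g X - A)) * Real.exp (t^2 * d^2 / 8) := by
            apply mul_le_mul_of_nonneg_left hhoeff (Real.exp_pos _).le
    -- outer bound via IH
    have hintouter : Integrable (fun X => ∫ x₀, Real.exp (t * (H (x₀, X) - A)) ∂μ) P' := by
      apply integrable_of_bdd (C := Real.exp (|t| * (M + |A|)))
        ((((hHmeas.sub_const A).const_mul t).exp).stronglyMeasurable.integral_prod_left').measurable.aestronglyMeasurable
      filter_upwards with X
      rw [abs_of_nonneg (integral_nonneg fun x₀ => (Real.exp_pos _).le)]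
      have := norm_integral_le_of_norm_le_const (μ := μ)
        (f := fun x₀ => Real.exp (t * (H (x₀, X) - A))) (C := Real.exp (|t| * (M + |A|)))
        (Filter.Eventually.of_forall fun x₀ => by
          rw [Real.norm_eq_abs, abs_of_pos (Real.exp_pos _), Real.exp_le_exp]
          calc t * (H (x₀, X) - A) ≤ |t * (H (x₀, X) - A)| := le_abs_self _
            _ = |t| * |H (x₀, X) - A| := abs_mul _ _
            _ ≤ |t| * (M + |A|) := by
                apply mul_le_mul_of_nonneg_left _ (abs_nonneg t)
                calc |H (x₀, X) - A| ≤ |H (x₀, X)| + |A| := abs_sub _ _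
                  _ ≤ M + |A| := by linarith [hHbd (x₀, X)])
      rw [Real.norm_eq_abs, abs_of_nonneg (integral_nonneg fun x₀ => (Real.exp_pos _).le)] at this
      simpa [measure_univ] using this
    have hintg : Integrable (fun X => Real.exp (t * (g X - A)) * Real.exp (t^2*d^2/8)) P' := by
      apply integrable_of_bdd (C := Real.exp (|t| * (M + |A|)) * Real.exp (t^2*d^2/8))
        ((((hgmeas.sub_const A).const_mul t).exp).mul_const _).aestronglyMeasurable
      filter_upwards with X
      rw [abs_of_pos (by positivity)]
      apply mul_le_mul_of_nonneg_right _ (Real.exp_pos _).le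
      rw [Real.exp_le_exp]
      calc t * (g X - A) ≤ |t * (g X - A)| := le_abs_self _
        _ = |t| * |g X - A| := abs_mul _ _
        _ ≤ |t| * (M + |A|) := by
            apply mul_le_mul_of_nonneg_left _ (abs_nonneg t)
            calc |g X - A| ≤ |g X| + |A| := abs_sub _ _
              _ ≤ M + |A| := by linarith [hgbd X]
    have hIH := IH g hgmeas M hgbd hgbdd
    rw [← hA] at hIH
    calc ∫ X, Real.exp (t * (f X - A)) ∂P
        = ∫ X, (∫ x₀, Real.exp (t * (H (x₀, X) - A)) ∂μ) ∂P' := hstep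
      _ ≤ ∫ X, Real.exp (t * (g X - A)) * Real.exp (t^2*d^2/8) ∂P' :=
          integral_mono hintouter hintg hinner
      _ = (∫ X, Real.exp (t * (g X - A)) ∂P') * Real.exp (t^2*d^2/8) := by
          rw [← integral_mul_const]
      _ ≤ Real.exp (t^2 * d^2 * n / 8) * Real.exp (t^2*d^2/8) := by
          apply mul_le_mul_of_nonneg_right hIH (Real.exp_pos _).le
      _ = _ := by
          rw [← Real.exp_add]
          congr 1
          push_cast
          ring

/-- McDiarmid tail bound. -/
lemma mcdiarmid_tail {𝒳 : Type*} [MeasurableSpace 𝒳] (μ : Measure 𝒳) [IsProbabilityMeasure μ]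
    {n : ℕ} (hn : 0 < n) {f : (Fin n → 𝒳) → ℝ} (hf : Measurable f) {M : ℝ}
    (hM : ∀ X, |f X| ≤ M) {d : ℝ} (hd : 0 < d)
    (hbd : ∀ (X) (j) (v), f X - f (Function.update X j v) ≤ d)
    {ε : ℝ} (hε : 0 ≤ ε) :
    ((Measure.pi fun _ : Fin n => μ)
        {X | ε ≤ f X - ∫ Y, f Y ∂(Measure.pi fun _ : Fin n => μ)}).toReal
      ≤ Real.exp (-2 * ε^2 / (n * d^2)) := by
  set P : Measure (Fin n → 𝒳) := Measure.pi fun _ => μ with hP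
  set W : (Fin n → 𝒳) → ℝ := fun X => f X - ∫ Y, f Y ∂P with hW
  set t : ℝ := 4 * ε / (n * d^2) with ht
  have hn' : (0:ℝ) < n := Nat.cast_pos.mpr hn
  have ht0 : 0 ≤ t := by positivity
  have hWmeas : Measurable W := hf.sub_const _
  have hint : Integrable (fun X => Real.exp (t * W X)) P := by
    set A := ∫ Y, f Y ∂P with hA
    apply Integrable.mono' (integrable_const (Real.exp (|t| * (M + |A|))))
      (((hWmeas.const_mul t).exp).aestronglyMeasurable)
    filter_upwards with X
    rw [Real.norm_eq_abs, abs_of_pos (Real.exp_pos _), Real.exp_le_exp]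
    calc t * W X ≤ |t * W X| := le_abs_self _
      _ = |t| * |W X| := abs_mul _ _
      _ ≤ |t| * (M + |A|) := by
          apply mul_le_mul_of_nonneg_left _ (abs_nonneg t)
          calc |W X| ≤ |f X| + |A| := abs_sub _ _
            _ ≤ M + |A| := by linarith [hM X]
  have hmgf := ProbabilityTheory.measure_ge_le_exp_mul_mgf (X := W) (μ := P) ε ht0 hint
  have hmgfle : ProbabilityTheory.mgf W P t ≤ Real.exp (t^2 * d^2 * n / 8) := by
    have := mcdiarmid_mgf μ hd.le t n f hf M hM hbd
    simpa [ProbabilityTheory.mgf, hW, hP] using this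
  calc (P {X | ε ≤ W X}).toReal ≤ Real.exp (-t * ε) * ProbabilityTheory.mgf W P t := hmgf
    _ ≤ Real.exp (-t * ε) * Real.exp (t^2 * d^2 * n / 8) :=
        mul_le_mul_of_nonneg_left hmgfle (Real.exp_pos _).le
    _ = Real.exp (-t * ε + t^2 * d^2 * n / 8) := (Real.exp_add _ _).symm
    _ ≤ Real.exp (-2 * ε^2 / (n * d^2)) := by
        rw [Real.exp_le_exp, ht]
        have h1 : -(4 * ε / (n * d^2)) * ε + (4 * ε / (n * d^2))^2 * d^2 * n / 8
            = -2 * ε^2 / (n * d^2) := by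
          field_simp
          ring
        rw [h1]



instance : IsProbabilityMeasure signMeasure := by
  constructor
  simp [signMeasure]
  rw [ENNReal.inv_two_add_inv_two]


section helpers
variable {I : Type*} [Fintype I] [Nonempty I]

lemma fin_le_ciSup (a : I → ℝ) (i : I) : a i ≤ ⨆ i, a i :=
  le_ciSup (Set.Finite.bddAbove (Set.finite_range a)) i

lemma fin_ciSup_le {a : I → ℝ} {C : ℝ} (h : ∀ i, a i ≤ C) : ⨆ i, a i ≤ C := ciSup_le h

lemma fin_ciSup_nonneg (a : I → ℝ) (h : ∀ i, 0 ≤ a i) : 0 ≤ ⨆ i, a i :=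
  (h (Classical.arbitrary I)).trans (fin_le_ciSup a _)

lemma avg_abs_le {m : ℕ} (hm : 0 < m) (v : Fin m → ℝ) (C : ℝ) (h : ∀ j, |v j| ≤ C) :
    |(∑ j, v j) / m| ≤ C := by
  have hm' : (0:ℝ) < m := Nat.cast_pos.mpr hm
  rw [abs_div, abs_of_pos hm', div_le_iff₀ hm']
  calc |∑ j, v j| ≤ ∑ j, |v j| := Finset.abs_sum_le_sum_abs _ _
    _ ≤ ∑ _j : Fin m, C := Finset.sum_le_sum fun j _ => h j
    _ = C * m := by simp [mul_comm]
end helpers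

lemma pi_map_eval {𝒳 : Type*} [MeasurableSpace 𝒳] (μ : Measure 𝒳) [IsProbabilityMeasure μ]
    {m : ℕ} (j : Fin m) :
    (Measure.pi fun _ : Fin m => μ).map (fun X => X j) = μ := by
  ext s hs
  rw [Measure.map_apply (measurable_pi_apply j) hs]
  have h1 : (fun X : Fin m → 𝒳 => X j) ⁻¹' s
      = Set.pi Set.univ (Function.update (fun _ => Set.univ) j s) := by
    ext X
    simp only [Set.mem_preimage, Set.mem_pi, Set.mem_univ, forall_true_left]
    constructor
    · intro h i
      by_cases hi : i = j
      · subst hi; simpa [Function.update_self] using h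
      · simp [Function.update_apply, hi]
    · intro h
      have := h j
      simpa using this
  rw [h1, Measure.pi_pi]
  calc ∏ i, μ (Function.update (fun _ => Set.univ) j s i)
      = ∏ i : Fin m, (if i = j then μ s else 1) := by
        refine Finset.prod_congr rfl fun i _ => ?_
        by_cases hi : i = j <;> simp [Function.update_apply, hi]
    _ = μ s := by simp

lemma integral_eval {𝒳 : Type*} [MeasurableSpace 𝒳] (μ : Measure 𝒳) [IsProbabilityMeasure μ]
    {m : ℕ} (j : Fin m) {φ : 𝒳 → ℝ} (hφ : Measurable φ) :
    ∫ X, φ (X j) ∂(Measure.pi fun _ : Fin m => μ) = ∫ x, φ x ∂μ := by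
  have h := integral_map (μ := Measure.pi fun _ : Fin m => μ)
    (φ := fun X : Fin m → 𝒳 => X j) (measurable_pi_apply j).aemeasurable
    (f := φ) (hφ.aestronglyMeasurable)
  rw [pi_map_eval μ j] at h
  exact h.symm

/-- Symmetrization: expected sup deviation is at most twice the Rademacher average. -/
lemma symmetrization {𝒳 : Type*} [MeasurableSpace 𝒳] (μ : Measure 𝒳) [IsProbabilityMeasure μ]
    {I : Type*} [Fintype I] [Nonempty I] (u : I → 𝒳 → ℝ) (c : ℝ)
    (hmeas : ∀ i, Measurable (u i)) (hb : ∀ i x, |u i x| ≤ c / 2)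
    (m : ℕ) (hm : 0 < m) :
    ∫ X, (⨆ i, |(∫ x, u i x ∂μ) - (∑ j, u i (X j)) / m|) ∂(Measure.pi fun _ : Fin m => μ)
      ≤ 2 * (∫ q, (⨆ i, |(∑ j, q.2 j * u i (q.1 j)) / m|)
          ∂((Measure.pi fun _ : Fin m => μ).prod (Measure.pi fun _ : Fin m => signMeasure))) := by
  have hne : Nonempty 𝒳 := Measure.nonempty_of_neZero μ
  have hc0 : 0 ≤ c := by
    have := hb (Classical.arbitrary I) (Classical.arbitrary 𝒳)
    have h0 := abs_nonneg (u (Classical.arbitrary I) (Classical.arbitrary 𝒳))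
    linarith
  set P : Measure (Fin m → 𝒳) := Measure.pi fun _ => μ with hP
  set S : Measure (Fin m → ℝ) := Measure.pi fun _ => signMeasure with hS
  set Ei : I → ℝ := fun i => ∫ x, u i x ∂μ with hEidef
  set F : I → (Fin m → 𝒳) → ℝ := fun i X => (∑ j, u i (X j)) / m with hFdef
  set G : (Fin m → 𝒳) × (Fin m → 𝒳) → ℝ :=
    fun q => ⨆ i, |(∑ j, (u i (q.2 j) - u i (q.1 j))) / m| with hGdef
  set g1 : (Fin m → 𝒳) × (Fin m → ℝ) → ℝ :=
    fun q => ⨆ i, |(∑ j, q.2 j * u i (q.1 j)) / m| with hg1def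
  set Γ : ((Fin m → 𝒳) × (Fin m → 𝒳)) × (Fin m → ℝ) → ℝ :=
    fun p => ⨆ i, |(∑ j, p.2 j * (u i (p.1.2 j) - u i (p.1.1 j))) / m| with hΓdef
  set R : ℝ := ∫ q, g1 q ∂(P.prod S) with hRdef
  -- measurability
  have hFmeas : ∀ i, Measurable (F i) := fun i =>
    (Finset.univ.measurable_sum fun j _ => (hmeas i).comp (measurable_pi_apply j)).div_const _
  have hZmeas : Measurable fun X => ⨆ i, |Ei i - F i X| :=
    Measurable.iSup fun i => (measurable_const.sub (hFmeas i)).abs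
  have hGmeas : Measurable G := by
    apply Measurable.iSup
    intro i
    apply Measurable.abs
    apply Measurable.div_const
    exact Finset.univ.measurable_sum fun j _ =>
      ((hmeas i).comp ((measurable_pi_apply j).comp measurable_snd)).sub
        ((hmeas i).comp ((measurable_pi_apply j).comp measurable_fst))
  have hg1meas : Measurable g1 := by
    apply Measurable.iSup
    intro i
    apply Measurable.abs
    apply Measurable.div_const
    exact Finset.univ.measurable_sum fun j _ =>
      ((measurable_pi_apply j).comp measurable_snd).mul
        ((hmeas i).comp ((measurable_pi_apply j).comp measurable_fst))
  have hΓmeas : Measurable Γ := by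
    apply Measurable.iSup
    intro i
    apply Measurable.abs
    apply Measurable.div_const
    exact Finset.univ.measurable_sum fun j _ =>
      ((measurable_pi_apply j).comp measurable_snd).mul
        (((hmeas i).comp ((measurable_pi_apply j).comp (measurable_snd.comp measurable_fst))).sub
         ((hmeas i).comp ((measurable_pi_apply j).comp (measurable_fst.comp measurable_fst))))
  -- bounds
  have hFbd : ∀ i X, |F i X| ≤ c/2 := fun i X =>
    avg_abs_le hm _ _ fun j => hb i (X j)
  have hEbd : ∀ i, |Ei i| ≤ c/2 := by
    intro i
    have := norm_integral_le_of_norm_le_const (μ := μ) (f := u i) (C := c/2)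
      (Filter.Eventually.of_forall fun x => by simpa [Real.norm_eq_abs] using hb i x)
    simpa [Real.norm_eq_abs, measure_univ] using this
  have hZbd : ∀ X, |(⨆ i, |Ei i - F i X|)| ≤ c := by
    intro X
    rw [abs_of_nonneg (fin_ciSup_nonneg _ fun i => abs_nonneg _)]
    apply fin_ciSup_le
    intro i
    calc |Ei i - F i X| ≤ |Ei i| + |F i X| := abs_sub _ _
      _ ≤ c/2 + c/2 := add_le_add (hEbd i) (hFbd i X)
      _ = c := by ring
  have hGbd : ∀ q, |G q| ≤ c := by
    intro q
    rw [hGdef, abs_of_nonneg (fin_ciSup_nonneg _ fun i => abs_nonneg _)]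
    apply fin_ciSup_le
    intro i
    apply avg_abs_le hm _ _
    intro j
    calc |u i (q.2 j) - u i (q.1 j)| ≤ |u i (q.2 j)| + |u i (q.1 j)| := abs_sub _ _
      _ ≤ c/2 + c/2 := add_le_add (hb _ _) (hb _ _)
      _ = c := by ring
  -- integrability of coordinates
  have hint_coord : ∀ i j, Integrable (fun X : Fin m → 𝒳 => u i (X j)) P := fun i j =>
    integrable_of_bdd ((hmeas i).comp (measurable_pi_apply j)).aestronglyMeasurable
      (Filter.Eventually.of_forall fun X => hb i (X j))
  have hFint : ∀ i, Integrable (F i) P := fun i =>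
    integrable_of_bdd (hFmeas i).aestronglyMeasurable
      (Filter.Eventually.of_forall fun X => hFbd i X)
  have hEi : ∀ i, ∫ X, F i X ∂P = Ei i := by
    intro i
    rw [hFdef]
    simp only
    rw [integral_div, integral_finset_sum _ fun j _ => hint_coord i j]
    have : ∀ j : Fin m, ∫ X, u i (X j) ∂P = Ei i := fun j => integral_eval μ j (hmeas i)
    simp only [this, Finset.sum_const, Finset.card_univ, Fintype.card_fin, nsmul_eq_mul]
    field_simp
  -- step 1 : ∫ Z ≤ ∫ G
  have hGint : Integrable G (P.prod P) :=
    integrable_of_bdd hGmeas.aestronglyMeasurable (Filter.Eventually.of_forall hGbd)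
  have hZleG : ∀ X, (⨆ i, |Ei i - F i X|) ≤ ∫ Y, G (X, Y) ∂P := by
    intro X
    apply fin_ciSup_le
    intro i
    have hGXint : Integrable (fun Y => G (X, Y)) P :=
      integrable_of_bdd (hGmeas.comp (measurable_const.prodMk measurable_id)).aestronglyMeasurable
        (Filter.Eventually.of_forall fun Y => hGbd (X, Y))
    have h1 : Ei i - F i X = ∫ Y, (F i Y - F i X) ∂P := by
      rw [integral_sub (hFint i) (integrable_const _), hEi i, integral_const]
      simp [measure_univ]
    rw [h1]
    calc |∫ Y, (F i Y - F i X) ∂P| ≤ ∫ Y, |F i Y - F i X| ∂P := by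
          simpa [Real.norm_eq_abs] using
            norm_integral_le_integral_norm (μ := P) (fun Y => F i Y - F i X)
      _ ≤ ∫ Y, G (X, Y) ∂P := by
          apply integral_mono (((hFint i).sub (integrable_const _)).abs) hGXint
          intro Y
          show |F i Y - F i X| ≤ G (X, Y)
          have h2 : F i Y - F i X = (∑ j, (u i (Y j) - u i (X j))) / m := by
            rw [hFdef]
            simp only
            rw [div_sub_div_same, Finset.sum_sub_distrib]
          rw [h2]
          exact fin_le_ciSup (fun i => |(∑ j, (u i (Y j) - u i (X j))) / m|) i
  have step1 : ∫ X, (⨆ i, |Ei i - F i X|) ∂P ≤ ∫ q, G q ∂(P.prod P) := by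
    have houter : Integrable (fun X => ∫ Y, G (X, Y) ∂P) P := by
      apply integrable_of_bdd (hGmeas.stronglyMeasurable.integral_prod_right').measurable.aestronglyMeasurable
        (C := c)
      filter_upwards with X
      have := norm_integral_le_of_norm_le_const (μ := P) (f := fun Y => G (X, Y)) (C := c)
        (Filter.Eventually.of_forall fun Y => by simpa [Real.norm_eq_abs] using hGbd (X, Y))
      simpa [Real.norm_eq_abs, measure_univ] using this
    calc ∫ X, (⨆ i, |Ei i - F i X|) ∂P ≤ ∫ X, (∫ Y, G (X, Y) ∂P) ∂P :=
          integral_mono (integrable_of_bdd hZmeas.aestronglyMeasurable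
            (Filter.Eventually.of_forall hZbd)) houter hZleG
      _ = ∫ q, G q ∂(P.prod P) := (integral_prod G hGint).symm
  -- good signs
  set goodset : Set (Fin m → ℝ) := {σ | ∀ j, σ j = 1 ∨ σ j = -1} with hgood
  have hgoodeq : goodset = Set.pi Set.univ (fun _ => ({1, -1} : Set ℝ)) := by
    ext σ
    simp [hgood, Set.mem_pi]
  have hgoodmeas : MeasurableSet goodset := by
    rw [hgoodeq]
    exact MeasurableSet.univ_pi fun j => (measurableSet_singleton (-1)).insert 1
  have hsign : signMeasure ({1, -1} : Set ℝ) = 1 := by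
    have hms : MeasurableSet ({1, -1} : Set ℝ) := (measurableSet_singleton (-1)).insert 1
    rw [signMeasure]
    simp only [Measure.add_apply, Measure.smul_apply, smul_eq_mul]
    rw [Measure.dirac_apply' _ hms, Measure.dirac_apply' _ hms]
    simp [Set.indicator_of_mem, Set.mem_insert_iff]
    rw [ENNReal.inv_two_add_inv_two]
  have hSgood : S goodset = 1 := by
    rw [hgoodeq, hS, Measure.pi_pi]
    simp [hsign]
  have haegood : ∀ᵐ σ ∂S, σ ∈ goodset := by
    rw [ae_iff]
    have : {σ : Fin m → ℝ | ¬ σ ∈ goodset} = goodsetᶜ := rfl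
    rw [this, measure_compl hgoodmeas (measure_ne_top _ _), hSgood, measure_univ, tsub_self]
  -- step 2 : ∫ G = ∫ Γ
  have hσeq : ∀ σ ∈ goodset, ∫ q, Γ (q, σ) ∂(P.prod P) = ∫ q, G q ∂(P.prod P) := by
    intro σ hσ
    set Q : Measure (Fin m → 𝒳 × 𝒳) := Measure.pi fun _ => μ.prod μ with hQ
    set ψ := MeasurableEquiv.arrowProdEquivProdArrow 𝒳 𝒳 (Fin m) with hψ
    have mpψ : MeasurePreserving ψ Q (P.prod P) :=
      measurePreserving_arrowProdEquivProdArrow 𝒳 𝒳 (Fin m) (fun _ => μ) (fun _ => μ)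
    set τ : (Fin m → 𝒳 × 𝒳) → (Fin m → 𝒳 × 𝒳) :=
      fun w j => if σ j = 1 then w j else (w j).swap with hτ
    have mpτ : MeasurePreserving τ Q Q := by
      apply measurePreserving_pi (fun _ => μ.prod μ) (fun _ => μ.prod μ)
        (f := fun j (p : 𝒳 × 𝒳) => if σ j = 1 then p else p.swap)
      intro j
      by_cases h : σ j = 1
      · simp only [h, if_true]
        exact MeasurePreserving.id _
      · simp only [h, if_false]
        exact Measure.measurePreserving_swap
    set T : (Fin m → 𝒳) × (Fin m → 𝒳) → (Fin m → 𝒳) × (Fin m → 𝒳) :=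
      fun q => ψ (τ (ψ.symm q)) with hT
    have mpT : MeasurePreserving T (P.prod P) (P.prod P) :=
      (mpψ.comp mpτ).comp (MeasurePreserving.symm ψ mpψ)
    have hψapp : ∀ w : Fin m → 𝒳 × 𝒳, ψ w = (fun j => (w j).1, fun j => (w j).2) := fun w => rfl
    have hψsymm : ∀ q : (Fin m → 𝒳) × (Fin m → 𝒳), ψ.symm q = fun j => (q.1 j, q.2 j) :=
      fun q => rfl
    have hGT : ∀ q, G (T q) = Γ (q, σ) := by
      rintro ⟨X, Y⟩
      rw [hGdef, hΓdef]
      simp only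
      congr 1
      funext i
      congr 2
      apply Finset.sum_congr rfl
      intro j _
      have hTq : T (X, Y) = (fun j => (τ (ψ.symm (X, Y)) j).1, fun j => (τ (ψ.symm (X, Y)) j).2) :=
        hψapp _
      rw [hTq]
      simp only [hψsymm, hτ]
      rcases hσ j with h | h
      · simp [h]
      · have h1 : σ j ≠ 1 := by rw [h]; norm_num
        rw [if_neg h1, h]
        simp [Prod.swap]
    calc ∫ q, Γ (q, σ) ∂(P.prod P) = ∫ q, G (T q) ∂(P.prod P) := by
          apply integral_congr_ae
          filter_upwards with q
          rw [hGT q]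
      _ = ∫ q, G q ∂((P.prod P).map T) :=
          (integral_map mpT.aemeasurable hGmeas.aestronglyMeasurable).symm
      _ = ∫ q, G q ∂(P.prod P) := by rw [mpT.map_eq]
  have haegood2 : ∀ᵐ p ∂((P.prod P).prod S), p.2 ∈ goodset := by
    rw [ae_iff]
    have h1 : {p : ((Fin m → 𝒳) × (Fin m → 𝒳)) × (Fin m → ℝ) | ¬ p.2 ∈ goodset}
        = Set.univ ×ˢ goodsetᶜ := by
      ext p
      simp
    rw [h1, Measure.prod_prod, measure_compl hgoodmeas (measure_ne_top _ _), hSgood]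
    simp
  have hΓbd_good : ∀ p : ((Fin m → 𝒳) × (Fin m → 𝒳)) × (Fin m → ℝ),
      p.2 ∈ goodset → |Γ p| ≤ c := by
    rintro ⟨⟨X, Y⟩, σ⟩ hσ
    have hσ' : ∀ j, σ j = 1 ∨ σ j = -1 := hσ
    rw [hΓdef, abs_of_nonneg (fin_ciSup_nonneg _ fun i => abs_nonneg _)]
    apply fin_ciSup_le
    intro i
    apply avg_abs_le hm
    intro j
    have hσ1 : |σ j| = 1 := by rcases hσ' j with h | h <;> rw [h] <;> norm_num
    rw [abs_mul, hσ1, one_mul]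
    calc |u i (Y j) - u i (X j)| ≤ |u i (Y j)| + |u i (X j)| := abs_sub _ _
      _ ≤ c/2 + c/2 := add_le_add (hb _ _) (hb _ _)
      _ = c := by ring
  have hΓint : Integrable Γ ((P.prod P).prod S) := by
    apply integrable_of_bdd hΓmeas.aestronglyMeasurable (C := c)
    filter_upwards [haegood2] with p hp
    exact hΓbd_good p hp
  have step2 : ∫ q, G q ∂(P.prod P) = ∫ p, Γ p ∂((P.prod P).prod S) := by
    rw [integral_prod_symm Γ hΓint]
    symm
    calc ∫ σ, (∫ q, Γ (q, σ) ∂(P.prod P)) ∂S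
        = ∫ _σ, (∫ q, G q ∂(P.prod P)) ∂S := by
          apply integral_congr_ae
          filter_upwards [haegood] with σ hσ
          exact hσeq σ hσ
      _ = ∫ q, G q ∂(P.prod P) := by
          rw [integral_const]
          simp [measure_univ]
  -- step 3 : ∫ Γ ≤ 2R
  have hg1bd_good : ∀ q : (Fin m → 𝒳) × (Fin m → ℝ), q.2 ∈ goodset → |g1 q| ≤ c/2 := by
    rintro ⟨W, σ⟩ hσ
    have hσ' : ∀ j, σ j = 1 ∨ σ j = -1 := hσ
    rw [hg1def, abs_of_nonneg (fin_ciSup_nonneg _ fun i => abs_nonneg _)]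
    apply fin_ciSup_le
    intro i
    apply avg_abs_le hm
    intro j
    have hσ1 : |σ j| = 1 := by rcases hσ' j with h | h <;> rw [h] <;> norm_num
    rw [abs_mul, hσ1, one_mul]
    exact hb _ _
  set π1 : ((Fin m → 𝒳) × (Fin m → 𝒳)) × (Fin m → ℝ) → (Fin m → 𝒳) × (Fin m → ℝ) :=
    fun p => (p.1.2, p.2) with hπ1
  set π2 : ((Fin m → 𝒳) × (Fin m → 𝒳)) × (Fin m → ℝ) → (Fin m → 𝒳) × (Fin m → ℝ) :=
    fun p => (p.1.1, p.2) with hπ2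
  have hπ1meas : Measurable π1 := (measurable_snd.comp measurable_fst).prodMk measurable_snd
  have hπ2meas : Measurable π2 := (measurable_fst.comp measurable_fst).prodMk measurable_snd
  have hmap1 : ((P.prod P).prod S).map π1 = P.prod S := by
    have h1 : π1 = Prod.map (Prod.snd : (Fin m → 𝒳) × (Fin m → 𝒳) → (Fin m → 𝒳)) id := rfl
    rw [h1, ← Measure.map_prod_map _ _ measurable_snd measurable_id, Measure.map_snd_prod,
      Measure.map_id]
    simp [measure_univ]
  have hmap2 : ((P.prod P).prod S).map π2 = P.prod S := by
    have h1 : π2 = Prod.map (Prod.fst : (Fin m → 𝒳) × (Fin m → 𝒳) → (Fin m → 𝒳)) id := rfl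
    rw [h1, ← Measure.map_prod_map _ _ measurable_fst measurable_id, Measure.map_fst_prod,
      Measure.map_id]
    simp [measure_univ]
  have hint1 : Integrable (fun p => g1 (π1 p)) ((P.prod P).prod S) := by
    apply integrable_of_bdd (hg1meas.comp hπ1meas).aestronglyMeasurable (C := c/2)
    filter_upwards [haegood2] with p hp
    exact hg1bd_good (π1 p) hp
  have hint2 : Integrable (fun p => g1 (π2 p)) ((P.prod P).prod S) := by
    apply integrable_of_bdd (hg1meas.comp hπ2meas).aestronglyMeasurable (C := c/2)
    filter_upwards [haegood2] with p hp
    exact hg1bd_good (π2 p) hp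
  have step3 : ∫ p, Γ p ∂((P.prod P).prod S) ≤ R + R := by
    have hptwise : ∀ p, Γ p ≤ g1 (π1 p) + g1 (π2 p) := by
      rintro ⟨⟨X, Y⟩, σ⟩
      rw [hΓdef]
      apply fin_ciSup_le
      intro i
      have h1 : (∑ j, σ j * (u i (Y j) - u i (X j))) / m
          = (∑ j, σ j * u i (Y j)) / m - (∑ j, σ j * u i (X j)) / m := by
        rw [div_sub_div_same, ← Finset.sum_sub_distrib]
        congr 1
        apply Finset.sum_congr rfl
        intro j _
        ring
      rw [h1]
      calc |(∑ j, σ j * u i (Y j)) / m - (∑ j, σ j * u i (X j)) / m|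
          ≤ |(∑ j, σ j * u i (Y j)) / m| + |(∑ j, σ j * u i (X j)) / m| := abs_sub _ _
        _ ≤ g1 (π1 ((X,Y),σ)) + g1 (π2 ((X,Y),σ)) := by
            apply add_le_add
            · exact fin_le_ciSup (fun i => |(∑ j, σ j * u i (Y j)) / m|) i
            · exact fin_le_ciSup (fun i => |(∑ j, σ j * u i (X j)) / m|) i
    have e1 : ∫ p, g1 (π1 p) ∂((P.prod P).prod S) = R := by
      rw [hRdef, ← hmap1, integral_map hπ1meas.aemeasurable hg1meas.aestronglyMeasurable]
    have e2 : ∫ p, g1 (π2 p) ∂((P.prod P).prod S) = R := by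
      rw [hRdef, ← hmap2, integral_map hπ2meas.aemeasurable hg1meas.aestronglyMeasurable]
    calc ∫ p, Γ p ∂((P.prod P).prod S)
        ≤ ∫ p, (g1 (π1 p) + g1 (π2 p)) ∂((P.prod P).prod S) :=
          integral_mono hΓint (hint1.add hint2) hptwise
      _ = R + R := by rw [integral_add hint1 hint2, e1, e2]
  calc ∫ X, (⨆ i, |Ei i - F i X|) ∂P ≤ ∫ q, G q ∂(P.prod P) := step1
    _ = ∫ p, Γ p ∂((P.prod P).prod S) := step2
    _ ≤ R + R := step3
    _ = 2 * R := by ring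


/-- High-probability bound via the (expected) Rademacher average. -/
theorem stmt9 {𝒳 : Type*} [MeasurableSpace 𝒳] (μ : Measure 𝒳) [IsProbabilityMeasure μ]
    {I : Type*} [Fintype I] [Nonempty I] (u : I → 𝒳 → ℝ) (c : ℝ)
    (hmeas : ∀ i, Measurable (u i))
    (hb : ∀ i x, |u i x| ≤ c / 2)
    (m : ℕ) (hm : 0 < m) (δ : ℝ) (hδ0 : 0 < δ) (hδ1 : δ < 1) :
    ENNReal.ofReal (1 - δ) ≤
      (Measure.pi fun _ : Fin m => μ) {X | (⨆ i, |(∫ x, u i x ∂μ) - (∑ j, u i (X j)) / m|) ≤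
        2 * (∫ q, (⨆ i, |(∑ j, q.2 j * u i (q.1 j)) / m|)
              ∂((Measure.pi fun _ : Fin m => μ).prod (Measure.pi fun _ : Fin m => signMeasure)))
          + c * Real.sqrt (Real.log (1 / δ) / (2 * m))} := by
  have hne : Nonempty 𝒳 := Measure.nonempty_of_neZero μ
  have hc0 : 0 ≤ c := by
    have := hb (Classical.arbitrary I) (Classical.arbitrary 𝒳)
    have h0 := abs_nonneg (u (Classical.arbitrary I) (Classical.arbitrary 𝒳))
    linarith
  set P : Measure (Fin m → 𝒳) := Measure.pi fun _ => μ with hP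
  set S : Measure (Fin m → ℝ) := Measure.pi fun _ => signMeasure with hS
  set R : ℝ := ∫ q, (⨆ i, |(∑ j, q.2 j * u i (q.1 j)) / (m:ℝ)|) ∂(P.prod S) with hRdef
  set ε : ℝ := c * Real.sqrt (Real.log (1 / δ) / (2 * m)) with hεdef
  set Z : (Fin m → 𝒳) → ℝ := fun X => ⨆ i, |(∫ x, u i x ∂μ) - (∑ j, u i (X j)) / m| with hZdef
  rcases eq_or_lt_of_le hc0 with hc | hc
  · -- c = 0 : all functions are zero
    have hu : ∀ i x, u i x = 0 := by
      intro i x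
      have := hb i x
      rw [← hc] at this
      have h0 := abs_nonneg (u i x)
      have : |u i x| = 0 := by linarith
      exact abs_eq_zero.mp this
    have hset : {X : Fin m → 𝒳 | Z X ≤ 2 * R + ε} = Set.univ := by
      ext X
      simp only [Set.mem_setOf_eq, Set.mem_univ, iff_true]
      have hZ0 : Z X = 0 := by
        rw [hZdef]
        simp only [hu]
        simp [ciSup_const]
      have hR0 : R = 0 := by
        rw [hRdef]
        have : ∀ q : (Fin m → 𝒳) × (Fin m → ℝ),
            (⨆ i, |(∑ j, q.2 j * u i (q.1 j)) / (m:ℝ)|) = 0 := by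
          intro q
          simp only [hu]
          simp [ciSup_const]
        simp only [this]
        simp
      rw [hZ0, hR0, hεdef, ← hc]
      simp
    rw [hset]
    rw [measure_univ]
    exact ENNReal.ofReal_le_one.mpr (by linarith)
  · -- c > 0
    have hm' : (0:ℝ) < m := Nat.cast_pos.mpr hm
    have hZmeas : Measurable Z := by
      apply Measurable.iSup
      intro i
      apply Measurable.abs
      exact measurable_const.sub
        ((Finset.univ.measurable_sum fun j _ => (hmeas i).comp (measurable_pi_apply j)).div_const _)
    have hEbd : ∀ i, |∫ x, u i x ∂μ| ≤ c/2 := by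
      intro i
      have := norm_integral_le_of_norm_le_const (μ := μ) (f := u i) (C := c/2)
        (Filter.Eventually.of_forall fun x => by simpa [Real.norm_eq_abs] using hb i x)
      simpa [Real.norm_eq_abs, measure_univ] using this
    have hFbd : ∀ i (X : Fin m → 𝒳), |(∑ j, u i (X j)) / (m:ℝ)| ≤ c/2 := fun i X =>
      avg_abs_le hm _ _ fun j => hb i (X j)
    have hZbd : ∀ X, |Z X| ≤ c := by
      intro X
      rw [hZdef]
      simp only
      rw [abs_of_nonneg (fin_ciSup_nonneg _ fun i => abs_nonneg _)]
      apply fin_ciSup_le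
      intro i
      calc |(∫ x, u i x ∂μ) - (∑ j, u i (X j)) / (m:ℝ)|
          ≤ |∫ x, u i x ∂μ| + |(∑ j, u i (X j)) / (m:ℝ)| := abs_sub _ _
        _ ≤ c/2 + c/2 := add_le_add (hEbd i) (hFbd i X)
        _ = c := by ring
    have hbdd : ∀ (X) (j) (v), Z X - Z (Function.update X j v) ≤ c / m := by
      intro X j v
      rw [sub_le_iff_le_add, add_comm]
      rw [hZdef]
      simp only
      apply fin_ciSup_le
      intro i
      have hdiff : (∑ k, u i (Function.update X j v k)) / (m:ℝ) - (∑ k, u i (X k)) / (m:ℝ)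
          = (u i v - u i (X j)) / m := by
        rw [div_sub_div_same]
        congr 1
        rw [← Finset.sum_sub_distrib]
        have : ∀ k : Fin m, u i (Function.update X j v k) - u i (X k)
            = if k = j then u i v - u i (X j) else 0 := by
          intro k
          by_cases hk : k = j
          · subst hk; simp [Function.update_self]
          · simp [Function.update_apply, hk]
        rw [Finset.sum_congr rfl fun k _ => this k]
        simp
      have habs : |(∑ k, u i (Function.update X j v k)) / (m:ℝ) - (∑ k, u i (X k)) / (m:ℝ)|
          ≤ c / m := by
        rw [hdiff, abs_div, abs_of_pos hm']
        gcongr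
        calc |u i v - u i (X j)| ≤ |u i v| + |u i (X j)| := abs_sub _ _
          _ ≤ c := by linarith [hb i v, hb i (X j)]
      calc |(∫ x, u i x ∂μ) - (∑ k, u i (X k)) / (m:ℝ)|
          ≤ |(∫ x, u i x ∂μ) - (∑ k, u i (Function.update X j v k)) / (m:ℝ)|
            + |(∑ k, u i (Function.update X j v k)) / (m:ℝ) - (∑ k, u i (X k)) / (m:ℝ)| := by
            have := abs_sub_le ((∫ x, u i x ∂μ)) ((∑ k, u i (Function.update X j v k)) / (m:ℝ))
              ((∑ k, u i (X k)) / (m:ℝ))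
            linarith
        _ ≤ (⨆ i, |(∫ x, u i x ∂μ) - (∑ k, u i (Function.update X j v k)) / (m:ℝ)|) + c/m := by
            apply add_le_add _ habs
            exact fin_le_ciSup
              (fun i => |(∫ x, u i x ∂μ) - (∑ k, u i (Function.update X j v k)) / (m:ℝ)|) i
    have hsym : ∫ X, Z X ∂P ≤ 2 * R := symmetrization μ u c hmeas hb m hm
    have hlog0 : 0 ≤ Real.log (1/δ) := Real.log_nonneg (one_le_one_div hδ0 hδ1.le)
    have hε0 : 0 ≤ ε := mul_nonneg hc0 (Real.sqrt_nonneg _)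
    have hdpos : 0 < c / m := div_pos hc hm'
    have htail := mcdiarmid_tail μ hm hZmeas hZbd hdpos hbdd hε0
    have hδeq : Real.exp (-2 * ε^2 / (↑m * (c/↑m)^2)) = δ := by
      have hsq : (Real.sqrt (Real.log (1/δ) / (2*(m:ℝ))))^2 = Real.log (1/δ) / (2*m) :=
        Real.sq_sqrt (by positivity)
      have h1 : ε^2 = c^2 * (Real.log (1/δ) / (2*(m:ℝ))) := by
        rw [hεdef, mul_pow, hsq]
      have h2 : -2 * ε^2 / (↑m * (c/↑m)^2) = -Real.log (1/δ) := by
        rw [h1]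
        field_simp
      rw [h2, Real.exp_neg, Real.exp_log (by positivity), one_div, inv_inv]
    set bad := {X : Fin m → 𝒳 | ε ≤ Z X - ∫ Y, Z Y ∂P} with hbad
    have hPbad : P bad ≤ ENNReal.ofReal δ := by
      have h3 : (P bad).toReal ≤ δ := by
        rw [hδeq] at htail
        exact htail
      calc P bad = ENNReal.ofReal (P bad).toReal :=
            (ENNReal.ofReal_toReal (measure_ne_top _ _)).symm
        _ ≤ ENNReal.ofReal δ := ENNReal.ofReal_le_ofReal h3
    have hsym' : ∫ Y, Z Y ∂P ≤ 2 * R := hsym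
    have hsubset : {X : Fin m → 𝒳 | Z X ≤ 2*R + ε}ᶜ ⊆ bad := by
      intro X hX
      simp only [Set.mem_compl_iff, Set.mem_setOf_eq, not_le] at hX
      simp only [hbad, Set.mem_setOf_eq]
      linarith
    have hPcompl : P ({X : Fin m → 𝒳 | Z X ≤ 2*R + ε}ᶜ) ≤ ENNReal.ofReal δ :=
      (measure_mono hsubset).trans hPbad
    have hunion : (1:ENNReal) ≤ P {X : Fin m → 𝒳 | Z X ≤ 2*R + ε} + ENNReal.ofReal δ := by
      calc (1:ENNReal) = P Set.univ := (measure_univ).symm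
        _ = P ({X : Fin m → 𝒳 | Z X ≤ 2*R + ε} ∪ {X : Fin m → 𝒳 | Z X ≤ 2*R + ε}ᶜ) := by
            rw [Set.union_compl_self]
        _ ≤ P {X : Fin m → 𝒳 | Z X ≤ 2*R + ε} + P ({X : Fin m → 𝒳 | Z X ≤ 2*R + ε}ᶜ) :=
            measure_union_le _ _
        _ ≤ P {X : Fin m → 𝒳 | Z X ≤ 2*R + ε} + ENNReal.ofReal δ :=
            add_le_add le_rfl hPcompl
    calc ENNReal.ofReal (1 - δ) = 1 - ENNReal.ofReal δ := by
          rw [ENNReal.ofReal_sub _ hδ0.le, ENNReal.ofReal_one]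
      _ ≤ P {X : Fin m → 𝒳 | Z X ≤ 2*R + ε} := tsub_le_iff_right.mpr hunion
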